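/- Let Γ be a symmetric circulant graph on n vertices (γ_{ij} = γ_{|i−j| mod n}), let G be a matrix Lie group with Lohe closure, f(x) = x^p for some p ≥ 1, and T ∈ G with T ≠ I and Tⁿ = I. Then the twist configuration X_i = T^i satisfies, for every i, Σ_{j=1}^n γ_{ij}((X_j X_i⁻¹)^p − (X_i X_j⁻¹)^p) = 0; i.e. it is a fixed point of the homogeneous quantum Kuramoto system. -/

import Mathlib

open Matrix

private lemma twist_key {d n : ℕ} [NeZero n]
    (T : Matrix (Fin d) (Fin d) ℂ) (hTn : T ^ n = 1) (a b : ZMod n) :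
    T ^ a.val * (T ^ b.val)⁻¹ = T ^ ((a - b).val) := by
  have hb : b.val ≤ n := le_of_lt (ZMod.val_lt b)
  have hinv : (T ^ b.val)⁻¹ = T ^ (n - b.val) := by
    apply inv_eq_right_inv
    rw [← pow_add, Nat.add_sub_cancel' hb, hTn]
  rw [hinv, ← pow_add]
  have hcast : ((a.val + (n - b.val) : ℕ) : ZMod n) = a - b := by
    push_cast [Nat.cast_sub hb]
    simp [ZMod.natCast_val, ZMod.natCast_self]
    ring
  have hmod : (a.val + (n - b.val)) % n = (a - b).val := by
    have := ZMod.val_natCast (n := n) (a.val + (n - b.val))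
    rw [hcast] at this
    omega
  rw [pow_eq_pow_mod _ hTn, hmod]

/-- On a symmetric circulant graph (`γᵢⱼ` depending only on `i - j` mod `n`,
with `γ(k) = γ(-k)`), the twist configuration `Xᵢ = Tⁱ` generated by `T ∈ G`
with `T ≠ 1`, `Tⁿ = 1` is a fixed point of the homogeneous quantum Kuramoto
system with `f(x) = xᵖ`:
`Σⱼ γᵢⱼ ((Xⱼ Xᵢ⁻¹)ᵖ - (Xᵢ Xⱼ⁻¹)ᵖ) = 0` for every `i`. -/
theorem twist_is_fixed_point {d n : ℕ} [NeZero n]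
    (γ : ZMod n → ℝ) (hγ : ∀ k, γ (-k) = γ k)
    (T : Matrix (Fin d) (Fin d) ℂ)
    (hTunit : IsUnit T) (hTn : T ^ n = 1) (hTne : T ≠ 1)
    (p : ℕ) (hp : 1 ≤ p)
    (X : ZMod n → Matrix (Fin d) (Fin d) ℂ)
    (hX : ∀ i : ZMod n, X i = T ^ (i.val)) :
    ∀ i : ZMod n,
      ∑ j : ZMod n, γ (i - j) •
        ((X j * (X i)⁻¹) ^ p - (X i * (X j)⁻¹) ^ p) = 0 := by
  intro i
  set F : ZMod n → Matrix (Fin d) (Fin d) ℂ := fun j =>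
    γ (i - j) • ((X j * (X i)⁻¹) ^ p - (X i * (X j)⁻¹) ^ p) with hF
  have hFval : ∀ j, F j = γ (i - j) • ((T ^ ((j - i).val)) ^ p - (T ^ ((i - j).val)) ^ p) := by
    intro j
    rw [hF]
    simp only [hX, twist_key T hTn]
  have hneg : ∀ j, F (2 * i - j) = - F j := by
    intro j
    rw [hFval, hFval]
    have h1 : i - (2 * i - j) = -(i - j) := by ring
    have h2 : (2 * i - j) - i = i - j := by ring
    rw [h1, h2, hγ, smul_sub, smul_sub]
    have h3 : j - i = i - (2 * i - j) := by ring
    abel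
  have hbij : Function.Bijective (fun j : ZMod n => 2 * i - j) := by
    constructor
    · intro a b h; exact sub_right_injective h
    · intro a; exact ⟨2 * i - a, by ring⟩
  have hsum : ∑ j : ZMod n, F (2 * i - j) = ∑ j : ZMod n, F j :=
    Fintype.sum_bijective _ hbij _ _ (fun j => rfl)
  have hS : ∑ j : ZMod n, F j = - ∑ j : ZMod n, F j := by
    calc ∑ j : ZMod n, F j = ∑ j : ZMod n, F (2 * i - j) := hsum.symm
      _ = ∑ j : ZMod n, - F j := Finset.sum_congr rfl (fun j _ => hneg j)
      _ = - ∑ j : ZMod n, F j := Finset.sum_neg_distrib _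
  have h2S : (2 : ℂ) • (∑ j : ZMod n, F j) = 0 := by
    rw [two_smul]
    nth_rewrite 2 [hS]
    simp
  have := smul_eq_zero.mp h2S
  rcases this with h | h
  · exact absurd h two_ne_zero
  · exact h
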